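/- Let n ≥ 1 and let G : ℝⁿ → [0,∞) be measurable with G(X) → ∞ as ‖X‖ → ∞ (i.e. for every N there is r such that G(X) ≥ N whenever ‖X‖ > r). For measurable u : ℝ → ℝ define I_G[u] = ∫_{ℝⁿ} G(x₁,…,xₙ) ∏_{i=1}^n u(x_i)² dx₁⋯dxₙ. Then for every ε > 0 there exists R > 0 such that every measurable u : ℝ → ℝ with ∫_ℝ u(x)² dx ≤ 1 and I_G[u] ≤ 1 satisfies ∫_{|x|>R} u(x)² dx ≤ ε; i.e., the family { u : ‖u‖_{L²} ≤ 1, I_G[u] ≤ 1 } is uniformly tight. -/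

import Mathlib

open MeasureTheory ENNReal

lemma lintegral_pi_prod_aux (n : ℕ) (f : Fin n → ℝ → ℝ≥0∞) (hf : ∀ i, Measurable (f i)) :
    (∫⁻ X : Fin n → ℝ, ∏ i, f i (X i)) = ∏ i, ∫⁻ x : ℝ, f i x := by
  induction n with
  | zero =>
    simp only [Finset.univ_eq_empty, Finset.prod_empty, lintegral_one]
    rw [show (volume : Measure (Fin 0 → ℝ)) = Measure.pi (fun _ => volume) from rfl,
      Measure.pi_univ]
    simp
  | succ n ih =>
    have hmp := MeasureTheory.volume_preserving_piFinSuccAbove (fun _ : Fin (n + 1) => ℝ) 0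
    have hgmeas : Measurable fun p : ℝ × (Fin n → ℝ) =>
        f 0 p.1 * ∏ j : Fin n, f j.succ (p.2 j) := by
      apply Measurable.mul
      · exact (hf 0).comp measurable_fst
      · exact Finset.measurable_prod _ fun j _ =>
          (hf j.succ).comp ((measurable_pi_apply j).comp measurable_snd)
    calc (∫⁻ X : Fin (n + 1) → ℝ, ∏ i, f i (X i))
        = ∫⁻ X : Fin (n + 1) → ℝ,
            f 0 ((MeasurableEquiv.piFinSuccAbove (fun _ => ℝ) 0) X).1 *
            ∏ j : Fin n, f j.succ (((MeasurableEquiv.piFinSuccAbove (fun _ => ℝ) 0) X).2 j) := by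
          apply lintegral_congr
          intro X
          rw [Fin.prod_univ_succ]
          rfl
      _ = ∫⁻ p : ℝ × (Fin n → ℝ), f 0 p.1 * ∏ j : Fin n, f j.succ (p.2 j) :=
          hmp.lintegral_comp hgmeas
      _ = (∫⁻ x : ℝ, f 0 x) * ∫⁻ Y : Fin n → ℝ, ∏ j : Fin n, f j.succ (Y j) :=
          lintegral_prod_mul (hf 0).aemeasurable
            (Finset.measurable_prod _ fun (j : Fin n) _ =>
              (hf j.succ).comp (measurable_pi_apply j)).aemeasurable
      _ = ∏ i, ∫⁻ x : ℝ, f i x := by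
          rw [ih (fun j : Fin n => f j.succ) (fun j => hf j.succ), Fin.prod_univ_succ]

/-- If `G : ℝⁿ → [0,∞)` is measurable and `G(X) → ∞` as `‖X‖ → ∞`,
then the family `{u : ‖u‖_{L²} ≤ 1, I_G[u] ≤ 1}` with
`I_G[u] = ∫_{ℝⁿ} G(X) ∏ᵢ u(Xᵢ)² dX` is uniformly tight. -/
theorem stmt_19 (n : ℕ) (hn : 1 ≤ n) (G : (Fin n → ℝ) → ℝ)
    (hGmeas : Measurable G) (hGnonneg : ∀ X, 0 ≤ G X)
    (hGcoer : ∀ N : ℝ, ∃ r : ℝ, ∀ X : Fin n → ℝ, r < ‖X‖ → N ≤ G X) :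
    ∀ ε : ℝ, 0 < ε → ∃ R : ℝ, 0 < R ∧
      ∀ u : ℝ → ℝ, Measurable u →
        (∫⁻ x : ℝ, ENNReal.ofReal (u x ^ 2)) ≤ 1 →
        (∫⁻ X : Fin n → ℝ, ENNReal.ofReal (G X * ∏ i, u (X i) ^ 2)) ≤ 1 →
        (∫⁻ x in {x : ℝ | R < |x|}, ENNReal.ofReal (u x ^ 2)) ≤ ENNReal.ofReal ε := by
  intro ε hε
  obtain ⟨r, hr⟩ := hGcoer (1 / ε ^ n)
  refine ⟨max r 1, lt_of_lt_of_le one_pos (le_max_right r 1), ?_⟩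
  intro u hu hL2 hIG
  set R : ℝ := max r 1 with hR
  set S : Set ℝ := {x : ℝ | R < |x|} with hS
  have hSmeas : MeasurableSet S := by
    apply measurableSet_lt measurable_const
    exact measurable_id.abs
  set M : ℝ≥0∞ := ∫⁻ x : ℝ, ENNReal.ofReal (u x ^ 2) with hM
  set T : ℝ≥0∞ := ∫⁻ x in S, ENNReal.ofReal (u x ^ 2) with hT
  by_cases hcase : M ≤ ENNReal.ofReal ε
  · exact le_trans (setLIntegral_le_lintegral _ _) hcase
  push_neg at hcase
  -- distinguished index
  haveI : NeZero n := ⟨Nat.one_le_iff_ne_zero.mp hn⟩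
  set i0 : Fin n := ⟨0, hn⟩ with hi0
  -- family of functions
  set F : Fin n → ℝ → ℝ≥0∞ := fun i =>
    if i = i0 then S.indicator (fun x => ENNReal.ofReal (u x ^ 2))
    else fun x => ENNReal.ofReal (u x ^ 2) with hF
  have hFmeas : ∀ i, Measurable (F i) := by
    intro i
    simp only [hF]
    split
    · exact ((ENNReal.measurable_ofReal.comp (hu.pow_const 2))).indicator hSmeas
    · exact (ENNReal.measurable_ofReal.comp (hu.pow_const 2))
  -- pointwise bound
  have hpoint : ∀ X : Fin n → ℝ,
      ENNReal.ofReal (1 / ε ^ n) * ∏ i, F i (X i) ≤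
        ENNReal.ofReal (G X * ∏ i, u (X i) ^ 2) := by
    intro X
    by_cases hX : X i0 ∈ S
    · have h1 : ∀ i, F i (X i) = ENNReal.ofReal (u (X i) ^ 2) := by
        intro i
        by_cases h : i = i0
        · subst h; simp only [hF, if_pos rfl, Set.indicator_of_mem hX]
        · simp only [hF, if_neg h]
      have hGX : 1 / ε ^ n ≤ G X := by
        apply hr
        have : R < |X i0| := hX
        calc r ≤ R := le_max_left r 1
          _ < |X i0| := this
          _ ≤ ‖X‖ := by
            rw [Pi.norm_def]
            exact_mod_cast norm_le_pi_norm X i0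
      calc ENNReal.ofReal (1 / ε ^ n) * ∏ i, F i (X i)
          = ENNReal.ofReal (1 / ε ^ n) * ∏ i, ENNReal.ofReal (u (X i) ^ 2) := by
            simp_rw [h1]
        _ ≤ ENNReal.ofReal (G X) * ∏ i, ENNReal.ofReal (u (X i) ^ 2) := by
            gcongr
        _ = ENNReal.ofReal (G X * ∏ i, u (X i) ^ 2) := by
            rw [ENNReal.ofReal_mul (hGnonneg X),
              ← ENNReal.ofReal_prod_of_nonneg (fun i _ => sq_nonneg (u (X i)))]
    · have : F i0 (X i0) = 0 := by
        simp only [hF, if_pos rfl, Set.indicator_of_notMem hX]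
      rw [Finset.prod_eq_zero (Finset.mem_univ i0) this, mul_zero]
      exact zero_le
  -- integrate the pointwise bound
  have hmain : ENNReal.ofReal (1 / ε ^ n) * ∏ i, (∫⁻ x : ℝ, F i x) ≤ 1 := by
    calc ENNReal.ofReal (1 / ε ^ n) * ∏ i, (∫⁻ x : ℝ, F i x)
        = ENNReal.ofReal (1 / ε ^ n) * ∫⁻ X : Fin n → ℝ, ∏ i, F i (X i) := by
          rw [lintegral_pi_prod_aux n F hFmeas]
      _ = ∫⁻ X : Fin n → ℝ, ENNReal.ofReal (1 / ε ^ n) * ∏ i, F i (X i) := by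
          exact (lintegral_const_mul' _ _ ENNReal.ofReal_ne_top).symm
      _ ≤ ∫⁻ X : Fin n → ℝ, ENNReal.ofReal (G X * ∏ i, u (X i) ^ 2) :=
          lintegral_mono hpoint
      _ ≤ 1 := hIG
  -- compute the product of integrals
  have hF0 : (∫⁻ x : ℝ, F i0 x) = T := by
    simp only [hF, if_pos rfl]
    rw [lintegral_indicator hSmeas]
  have hFi : ∀ i, i ≠ i0 → (∫⁻ x : ℝ, F i x) = M := by
    intro i h
    simp only [hF, if_neg h]
    exact hM.symm
  have hprod : ∏ i, (∫⁻ x : ℝ, F i x) = T * M ^ (n - 1) := by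
    rw [← Finset.mul_prod_erase Finset.univ _ (Finset.mem_univ i0), hF0]
    congr 1
    rw [Finset.prod_congr rfl (fun i hi => hFi i (Finset.ne_of_mem_erase hi)),
      Finset.prod_const, Finset.card_erase_of_mem (Finset.mem_univ i0),
      Finset.card_univ, Fintype.card_fin]
  rw [hprod] at hmain
  -- lower bound M^(n-1) by ε^(n-1)
  have hM1 : ENNReal.ofReal ε ≤ M := le_of_lt hcase
  have hmain2 : ENNReal.ofReal (1 / ε ^ n) * (T * (ENNReal.ofReal ε) ^ (n - 1)) ≤ 1 := by
    refine le_trans ?_ hmain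
    gcongr
  -- now algebra in ℝ≥0∞
  have hεne : ENNReal.ofReal ε ≠ 0 := by
    simp [ENNReal.ofReal_eq_zero, not_le, hε]
  have hεnetop : ENNReal.ofReal ε ≠ ⊤ := ENNReal.ofReal_ne_top
  have hkey : ENNReal.ofReal (1 / ε ^ n) * (ENNReal.ofReal ε) ^ (n - 1) =
      (ENNReal.ofReal ε)⁻¹ := by
    rw [← ENNReal.ofReal_pow (le_of_lt hε), ← ENNReal.ofReal_mul (by positivity),
      ← ENNReal.ofReal_inv_of_pos hε]
    congr 1
    field_simp
    rw [← pow_succ]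
    congr 1
    omega
  have hTfin : T * (ENNReal.ofReal ε)⁻¹ ≤ 1 := by
    calc T * (ENNReal.ofReal ε)⁻¹
        = ENNReal.ofReal (1 / ε ^ n) * (ENNReal.ofReal ε) ^ (n - 1) * T := by
          rw [hkey]; ring
      _ = ENNReal.ofReal (1 / ε ^ n) * (T * (ENNReal.ofReal ε) ^ (n - 1)) := by ring
      _ ≤ 1 := hmain2
  calc T = T * (ENNReal.ofReal ε)⁻¹ * ENNReal.ofReal ε := by
        rw [mul_assoc, ENNReal.inv_mul_cancel hεne hεnetop, mul_one]
    _ ≤ 1 * ENNReal.ofReal ε := by gcongr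
    _ = ENNReal.ofReal ε := one_mul _
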